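/- arXiv:0710.3303 — 3 statements merged into one kernel-verified Lean document; each statement's English description precedes it below -/
import Mathlib

section
/- Let K be an algebraically closed field of characteristic different from 2, let a₁, a₂, a₃, b₁, b₂, b₃ ∈ K, let m = [[a₁,b₃,b₂],[b₃,a₂,b₁],[b₂,b₁,a₃]], and set c₁ = a₂a₃ − b₁², c₂ = a₁a₃ − b₂², c₃ = a₁a₂ − b₃². Then the only common zero in K³ of the three partial derivatives of the Ciani form Q_m (equivalently, the plane quartic curve Q_m = 0 is nonsingular) is (0,0,0) if and only if a₁a₂a₃ ≠ 0, c₁c₂c₃ ≠ 0 and det m ≠ 0. -/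
open MvPolynomial

/-- The Ciani form `Q_m = a₁x⁴ + a₂y⁴ + a₃z⁴ + 2(b₁y²z² + b₂x²z² + b₃x²y²)`. -/
noncomputable def cianiForm {K : Type*} [CommRing K] (a₁ a₂ a₃ b₁ b₂ b₃ : K) :
    MvPolynomial (Fin 3) K :=
  C a₁ * X 0 ^ 4 + C a₂ * X 1 ^ 4 + C a₃ * X 2 ^ 4 +
    C 2 * (C b₁ * X 1 ^ 2 * X 2 ^ 2 + C b₂ * X 0 ^ 2 * X 2 ^ 2 + C b₃ * X 0 ^ 2 * X 1 ^ 2)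

lemma ciani_pd0 {K : Type*} [CommRing K] (a₁ a₂ a₃ b₁ b₂ b₃ : K) (x : Fin 3 → K) :
    eval x (pderiv 0 (cianiForm a₁ a₂ a₃ b₁ b₂ b₃)) =
      4 * x 0 * (a₁ * x 0 ^ 2 + b₃ * x 1 ^ 2 + b₂ * x 2 ^ 2) := by
  simp [cianiForm, pderiv_mul, pderiv_pow, pderiv_X]; ring

lemma ciani_pd1 {K : Type*} [CommRing K] (a₁ a₂ a₃ b₁ b₂ b₃ : K) (x : Fin 3 → K) :
    eval x (pderiv 1 (cianiForm a₁ a₂ a₃ b₁ b₂ b₃)) =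
      4 * x 1 * (b₃ * x 0 ^ 2 + a₂ * x 1 ^ 2 + b₁ * x 2 ^ 2) := by
  simp [cianiForm, pderiv_mul, pderiv_pow, pderiv_X]; ring

lemma ciani_pd2 {K : Type*} [CommRing K] (a₁ a₂ a₃ b₁ b₂ b₃ : K) (x : Fin 3 → K) :
    eval x (pderiv 2 (cianiForm a₁ a₂ a₃ b₁ b₂ b₃)) =
      4 * x 2 * (b₂ * x 0 ^ 2 + b₁ * x 1 ^ 2 + a₃ * x 2 ^ 2) := by
  simp [cianiForm, pderiv_mul, pderiv_pow, pderiv_X]; ring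

/-- A point where `xᵢ · Lᵢ = 0` for all `i` is a common zero of the partials. -/
lemma ciani_singular {K : Type*} [CommRing K] (a₁ a₂ a₃ b₁ b₂ b₃ : K) (x : Fin 3 → K)
    (e1 : x 0 * (a₁ * x 0 ^ 2 + b₃ * x 1 ^ 2 + b₂ * x 2 ^ 2) = 0)
    (e2 : x 1 * (b₃ * x 0 ^ 2 + a₂ * x 1 ^ 2 + b₁ * x 2 ^ 2) = 0)
    (e3 : x 2 * (b₂ * x 0 ^ 2 + b₁ * x 1 ^ 2 + a₃ * x 2 ^ 2) = 0) :
    ∀ i : Fin 3, eval x (pderiv i (cianiForm a₁ a₂ a₃ b₁ b₂ b₃)) = 0 := by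
  intro i
  fin_cases i
  · show eval x (pderiv (0 : Fin 3) (cianiForm a₁ a₂ a₃ b₁ b₂ b₃)) = 0
    rw [ciani_pd0]; linear_combination 4 * e1
  · show eval x (pderiv (1 : Fin 3) (cianiForm a₁ a₂ a₃ b₁ b₂ b₃)) = 0
    rw [ciani_pd1]; linear_combination 4 * e2
  · show eval x (pderiv (2 : Fin 3) (cianiForm a₁ a₂ a₃ b₁ b₂ b₃)) = 0
    rw [ciani_pd2]; linear_combination 4 * e3

/-- Key algebraic lemma: under the nondegeneracy conditions, the quadratic system
forces the trivial solution. -/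
lemma ciani_algebra {K : Type*} [Field K] (a₁ a₂ a₃ b₁ b₂ b₃ X Y Z : K)
    (hA : a₁ * a₂ * a₃ ≠ 0)
    (hB : (a₂ * a₃ - b₁ ^ 2) * (a₁ * a₃ - b₂ ^ 2) * (a₁ * a₂ - b₃ ^ 2) ≠ 0)
    (hD : a₁ * a₂ * a₃ - a₁ * b₁ ^ 2 - a₂ * b₂ ^ 2 - a₃ * b₃ ^ 2 + 2 * b₁ * b₂ * b₃ ≠ 0)
    (h1 : X * (a₁ * X + b₃ * Y + b₂ * Z) = 0)
    (h2 : Y * (b₃ * X + a₂ * Y + b₁ * Z) = 0)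
    (h3 : Z * (b₂ * X + b₁ * Y + a₃ * Z) = 0) :
    X = 0 ∧ Y = 0 ∧ Z = 0 := by
  have ha1 : a₁ ≠ 0 := fun h => hA (by rw [h]; ring)
  have ha2 : a₂ ≠ 0 := fun h => hA (by rw [h]; ring)
  have ha3 : a₃ ≠ 0 := fun h => hA (by rw [h]; ring)
  have hc1 : a₂ * a₃ - b₁ ^ 2 ≠ 0 := fun h => hB (by rw [h]; ring)
  have hc2 : a₁ * a₃ - b₂ ^ 2 ≠ 0 := fun h => hB (by rw [h]; ring)
  have hc3 : a₁ * a₂ - b₃ ^ 2 ≠ 0 := fun h => hB (by rw [h]; ring)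
  rcases mul_eq_zero.1 h1 with hX | hL1 <;>
  rcases mul_eq_zero.1 h2 with hY | hL2 <;>
  rcases mul_eq_zero.1 h3 with hZ | hL3
  · exact ⟨hX, hY, hZ⟩
  · refine ⟨hX, hY, ?_⟩
    have : a₃ * Z = 0 := by linear_combination hL3 - b₂ * hX - b₁ * hY
    exact (mul_eq_zero.1 this).resolve_left ha3
  · refine ⟨hX, ?_, hZ⟩
    have : a₂ * Y = 0 := by linear_combination hL2 - b₃ * hX - b₁ * hZ
    exact (mul_eq_zero.1 this).resolve_left ha2
  · refine ⟨hX, ?_, ?_⟩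
    · have : (a₂ * a₃ - b₁ ^ 2) * Y = 0 := by
        linear_combination a₃ * hL2 - b₁ * hL3 - (a₃ * b₃ - b₁ * b₂) * hX
      exact (mul_eq_zero.1 this).resolve_left hc1
    · have : (a₂ * a₃ - b₁ ^ 2) * Z = 0 := by
        linear_combination -b₁ * hL2 + a₂ * hL3 - (a₂ * b₂ - b₁ * b₃) * hX
      exact (mul_eq_zero.1 this).resolve_left hc1
  · refine ⟨?_, hY, hZ⟩
    have : a₁ * X = 0 := by linear_combination hL1 - b₃ * hY - b₂ * hZ
    exact (mul_eq_zero.1 this).resolve_left ha1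
  · refine ⟨?_, hY, ?_⟩
    · have : (a₁ * a₃ - b₂ ^ 2) * X = 0 := by
        linear_combination a₃ * hL1 - b₂ * hL3 - (a₃ * b₃ - b₁ * b₂) * hY
      exact (mul_eq_zero.1 this).resolve_left hc2
    · have : (a₁ * a₃ - b₂ ^ 2) * Z = 0 := by
        linear_combination -b₂ * hL1 + a₁ * hL3 - (a₁ * b₁ - b₂ * b₃) * hY
      exact (mul_eq_zero.1 this).resolve_left hc2
  · refine ⟨?_, ?_, hZ⟩
    · have : (a₁ * a₂ - b₃ ^ 2) * X = 0 := by
        linear_combination a₂ * hL1 - b₃ * hL2 - (a₂ * b₂ - b₁ * b₃) * hZ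
      exact (mul_eq_zero.1 this).resolve_left hc3
    · have : (a₁ * a₂ - b₃ ^ 2) * Y = 0 := by
        linear_combination -b₃ * hL1 + a₁ * hL2 - (a₁ * b₁ - b₂ * b₃) * hZ
      exact (mul_eq_zero.1 this).resolve_left hc3
  · refine ⟨?_, ?_, ?_⟩
    · have : (a₁ * a₂ * a₃ - a₁ * b₁ ^ 2 - a₂ * b₂ ^ 2 - a₃ * b₃ ^ 2 + 2 * b₁ * b₂ * b₃) * X
          = 0 := by
        linear_combination (a₂ * a₃ - b₁ ^ 2) * hL1 - (b₃ * a₃ - b₂ * b₁) * hL2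
          + (b₃ * b₁ - b₂ * a₂) * hL3
      exact (mul_eq_zero.1 this).resolve_left hD
    · have : (a₁ * a₂ * a₃ - a₁ * b₁ ^ 2 - a₂ * b₂ ^ 2 - a₃ * b₃ ^ 2 + 2 * b₁ * b₂ * b₃) * Y
          = 0 := by
        linear_combination -(b₃ * a₃ - b₁ * b₂) * hL1 + (a₁ * a₃ - b₂ ^ 2) * hL2
          - (a₁ * b₁ - b₃ * b₂) * hL3
      exact (mul_eq_zero.1 this).resolve_left hD
    · have : (a₁ * a₂ * a₃ - a₁ * b₁ ^ 2 - a₂ * b₂ ^ 2 - a₃ * b₃ ^ 2 + 2 * b₁ * b₂ * b₃) * Z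
          = 0 := by
        linear_combination (b₃ * b₁ - a₂ * b₂) * hL1 - (a₁ * b₁ - b₃ * b₂) * hL2
          + (a₁ * a₂ - b₃ ^ 2) * hL3
      exact (mul_eq_zero.1 this).resolve_left hD

/-- Over an algebraically closed field of characteristic `≠ 2`, the Ciani quartic
`Q_m = 0` is nonsingular (the partial derivatives of `Q_m` have `(0,0,0)` as only
common zero) if and only if `a₁a₂a₃ ≠ 0`, `c₁c₂c₃ ≠ 0` and `det m ≠ 0`, where
`cᵢ = aⱼaₖ − bᵢ²` and `m = [[a₁,b₃,b₂],[b₃,a₂,b₁],[b₂,b₁,a₃]]`. -/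
theorem stmt_5 {K : Type*} [Field K] [IsAlgClosed K] (hchar : (2 : K) ≠ 0)
    (a₁ a₂ a₃ b₁ b₂ b₃ : K) :
    (∀ x : Fin 3 → K,
        (∀ i : Fin 3, eval x (pderiv i (cianiForm a₁ a₂ a₃ b₁ b₂ b₃)) = 0) → x = 0)
      ↔ (a₁ * a₂ * a₃ ≠ 0 ∧
          (a₂ * a₃ - b₁ ^ 2) * (a₁ * a₃ - b₂ ^ 2) * (a₁ * a₂ - b₃ ^ 2) ≠ 0 ∧
          (!![a₁, b₃, b₂; b₃, a₂, b₁; b₂, b₁, a₃] : Matrix (Fin 3) (Fin 3) K).det ≠ 0) := by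
  have hdet : (!![a₁, b₃, b₂; b₃, a₂, b₁; b₂, b₁, a₃] : Matrix (Fin 3) (Fin 3) K).det
      = a₁ * a₂ * a₃ - a₁ * b₁ ^ 2 - a₂ * b₂ ^ 2 - a₃ * b₃ ^ 2 + 2 * b₁ * b₂ * b₃ := by
    simp [Matrix.det_fin_three]; ring
  constructor
  · intro h
    have hA : a₁ * a₂ * a₃ ≠ 0 := by
      intro h0
      rcases mul_eq_zero.1 h0 with h0 | h0
      · rcases mul_eq_zero.1 h0 with h0 | h0
        · have := h ![1, 0, 0] (ciani_singular a₁ a₂ a₃ b₁ b₂ b₃ _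
            (by simp [h0]) (by simp) (by simp))
          simpa using congrFun this 0
        · have := h ![0, 1, 0] (ciani_singular a₁ a₂ a₃ b₁ b₂ b₃ _
            (by simp) (by simp [h0]) (by simp))
          simpa using congrFun this 1
      · have := h ![0, 0, 1] (ciani_singular a₁ a₂ a₃ b₁ b₂ b₃ _
          (by simp) (by simp) (by simp [h0]))
        simpa using congrFun this 2
    have ha1 : a₁ ≠ 0 := fun h => hA (by rw [h]; ring)
    have ha2 : a₂ ≠ 0 := fun h => hA (by rw [h]; ring)
    refine ⟨hA, ?_, ?_⟩
    · intro h0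
      rcases mul_eq_zero.1 h0 with h0 | h0
      · rcases mul_eq_zero.1 h0 with h0 | h0
        · -- c₁ = 0 : singular point (0, y, 1)
          obtain ⟨y, hy⟩ := IsAlgClosed.exists_pow_nat_eq (-b₁ / a₂) (n := 2) two_pos
          have hy2 : a₂ * y ^ 2 = -b₁ := by rw [hy]; field_simp
          have e3 : b₂ * (0 : K) ^ 2 + b₁ * y ^ 2 + a₃ * 1 ^ 2 = 0 := by
            have : a₂ * (b₂ * (0 : K) ^ 2 + b₁ * y ^ 2 + a₃ * 1 ^ 2) = 0 := by
              linear_combination b₁ * hy2 + h0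
            exact (mul_eq_zero.1 this).resolve_left ha2
          have := h ![0, y, 1] (ciani_singular a₁ a₂ a₃ b₁ b₂ b₃ _
            (by simp) (by show y * (b₃ * (0:K) ^ 2 + a₂ * y ^ 2 + b₁ * 1 ^ 2) = 0; linear_combination y * hy2)
            (by simpa using e3))
          simpa using congrFun this 2
        · -- c₂ = 0 : singular point (t, 0, 1)
          obtain ⟨t, ht⟩ := IsAlgClosed.exists_pow_nat_eq (-b₂ / a₁) (n := 2) two_pos
          have ht2 : a₁ * t ^ 2 = -b₂ := by rw [ht]; field_simp
          have e3 : b₂ * t ^ 2 + b₁ * (0 : K) ^ 2 + a₃ * 1 ^ 2 = 0 := by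
            have : a₁ * (b₂ * t ^ 2 + b₁ * (0 : K) ^ 2 + a₃ * 1 ^ 2) = 0 := by
              linear_combination b₂ * ht2 + h0
            exact (mul_eq_zero.1 this).resolve_left ha1
          have := h ![t, 0, 1] (ciani_singular a₁ a₂ a₃ b₁ b₂ b₃ _
            (by show t * (a₁ * t ^ 2 + b₃ * (0:K) ^ 2 + b₂ * 1 ^ 2) = 0; linear_combination t * ht2) (by simp)
            (by simpa using e3))
          simpa using congrFun this 2
      · -- c₃ = 0 : singular point (t, 1, 0)
        obtain ⟨t, ht⟩ := IsAlgClosed.exists_pow_nat_eq (-b₃ / a₁) (n := 2) two_pos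
        have ht2 : a₁ * t ^ 2 = -b₃ := by rw [ht]; field_simp
        have e2 : b₃ * t ^ 2 + a₂ * 1 ^ 2 + b₁ * (0 : K) ^ 2 = 0 := by
          have : a₁ * (b₃ * t ^ 2 + a₂ * 1 ^ 2 + b₁ * (0 : K) ^ 2) = 0 := by
            linear_combination b₃ * ht2 + h0
          exact (mul_eq_zero.1 this).resolve_left ha1
        have := h ![t, 1, 0] (ciani_singular a₁ a₂ a₃ b₁ b₂ b₃ _
          (by show t * (a₁ * t ^ 2 + b₃ * 1 ^ 2 + b₂ * (0:K) ^ 2) = 0; linear_combination t * ht2) (by simpa using e2) (by simp))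
        simpa using congrFun this 1
    · intro h0
      obtain ⟨v, hv0, hv⟩ := Matrix.exists_mulVec_eq_zero_iff.2 h0
      have hr : ∀ i : Fin 3, ∃ r : K, r ^ 2 = v i :=
        fun i => IsAlgClosed.exists_pow_nat_eq (v i) two_pos
      choose r hrr using hr
      have h0' := congrFun hv 0
      have h1' := congrFun hv 1
      have h2' := congrFun hv 2
      simp [Matrix.mulVec, dotProduct, Fin.sum_univ_three] at h0' h1' h2'
      have := h r (ciani_singular a₁ a₂ a₃ b₁ b₂ b₃ r
        (by rw [hrr 0, hrr 1, hrr 2, h0']; ring)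
        (by rw [hrr 0, hrr 1, hrr 2, h1']; ring)
        (by rw [hrr 0, hrr 1, hrr 2, h2']; ring))
      apply hv0
      funext i
      rw [← hrr i, this]
      simp
  · rintro ⟨hA, hB, hC⟩ x hx
    rw [hdet] at hC
    have h4 : (4 : K) ≠ 0 := by
      have := mul_ne_zero hchar hchar
      rwa [show (2 : K) * 2 = 4 by norm_num] at this
    have get : ∀ i : Fin 3, ∀ L : K, 4 * x i * L = 0 → x i * L = 0 := by
      intro i L hL
      have : (4 : K) * (x i * L) = 0 := by rw [← hL]; ring
      exact (mul_eq_zero.1 this).resolve_left h4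
    have e0 := get 0 _ ((ciani_pd0 a₁ a₂ a₃ b₁ b₂ b₃ x) ▸ hx 0)
    have e1 := get 1 _ ((ciani_pd1 a₁ a₂ a₃ b₁ b₂ b₃ x) ▸ hx 1)
    have e2 := get 2 _ ((ciani_pd2 a₁ a₂ a₃ b₁ b₂ b₃ x) ▸ hx 2)
    have := ciani_algebra a₁ a₂ a₃ b₁ b₂ b₃ (x 0 ^ 2) (x 1 ^ 2) (x 2 ^ 2) hA hB hC
      (by linear_combination x 0 * e0) (by linear_combination x 1 * e1)
      (by linear_combination x 2 * e2)
    funext i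
    fin_cases i
    · exact pow_eq_zero_iff two_ne_zero |>.1 this.1
    · exact pow_eq_zero_iff two_ne_zero |>.1 this.2.1
    · exact pow_eq_zero_iff two_ne_zero |>.1 this.2.2
end

section
/- Let K be a field and for M ∈ GL₃(K) let Cof M denote its cofactor matrix (the transpose of the adjugate), so that M·(Cof M)ᵀ = (det M)·1₃. Then: (1) Cof : GL₃(K) → GL₃(K) is a group homomorphism; (2) Cof M = 1₃ if and only if M = 1₃ or M = −1₃; more generally Cof M = Cof M′ iff M′ = ±M; (3) the image of Cof is exactly G^{×2}(K) = {N ∈ GL₃(K) : det N is a square in K}. In other words, there is an exact sequence 1 → {±1} → GL₃(K) → G^{×2}(K) → 1 induced by M ↦ Cof M. -/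
open Matrix

/-- The cofactor matrix of a `3 × 3` matrix: the transpose of the adjugate,
so that `M·(Cof M)ᵀ = (det M)·1₃`. -/
def Cof {K : Type*} [Field K] (M : Matrix (Fin 3) (Fin 3) K) :
    Matrix (Fin 3) (Fin 3) K :=
  (Matrix.adjugate M)ᵀ

lemma cof_mul {K : Type*} [Field K] (M N : Matrix (Fin 3) (Fin 3) K) :
    Cof (M * N) = Cof M * Cof N := by
  simp [Cof, Matrix.adjugate_mul_distrib, Matrix.transpose_mul]

lemma cof_one {K : Type*} [Field K] : Cof (1 : Matrix (Fin 3) (Fin 3) K) = 1 := by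
  simp [Cof]

lemma cof_neg {K : Type*} [Field K] (M : Matrix (Fin 3) (Fin 3) K) :
    Cof (-M) = Cof M := by
  have : (-M) = (-1 : K) • M := by simp
  rw [Cof, this, Matrix.adjugate_smul]
  norm_num [Cof]

lemma cof_eq_one_iff {K : Type*} [Field K] (M : Matrix (Fin 3) (Fin 3) K)
    (h : IsUnit M.det) : Cof M = 1 ↔ M = 1 ∨ M = -1 := by
  constructor
  · intro hC
    have hadj : Matrix.adjugate M = 1 := by
      have := congrArg Matrix.transpose hC
      simpa [Cof] using this
    have hM : M = M.det • (1 : Matrix (Fin 3) (Fin 3) K) := by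
      have := Matrix.mul_adjugate M
      rwa [hadj, mul_one] at this
    set c := M.det with hc
    have hadj' : Matrix.adjugate (c • (1 : Matrix (Fin 3) (Fin 3) K)) = 1 := by
      rw [← hM, hadj]
    rw [Matrix.adjugate_smul, Matrix.adjugate_one] at hadj'
    have hc2 : c ^ (Fintype.card (Fin 3) - 1) = 1 := by
      have := congrArg (fun A : Matrix (Fin 3) (Fin 3) K => A 0 0) hadj'
      simpa [Matrix.one_apply] using this
    have hc2' : c * c = 1 := by
      have : c ^ 2 = 1 := by simpa using hc2
      simpa [sq] using this
    rcases mul_self_eq_one_iff.mp hc2' with h1 | h1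
    · left; rw [hM, h1, one_smul]
    · right; rw [hM, h1]; simp
  · rintro (rfl | rfl)
    · exact cof_one
    · rw [cof_neg]; exact cof_one

lemma cof_det_isUnit {K : Type*} [Field K] (M : Matrix (Fin 3) (Fin 3) K)
    (h : IsUnit M.det) : IsUnit (Cof M).det := by
  rw [Cof, Matrix.det_transpose, Matrix.det_adjugate]
  exact h.pow _

/-- The map `M ↦ Cof M` induces an exact sequence
`1 → {±1} → GL₃(K) → G^{×2}(K) → 1`:
(1) `Cof` is multiplicative on invertible matrices;
(2) its kernel is `{±1₃}`, and more generally `Cof M = Cof M'` iff `M' = ±M`;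
(3) its image is exactly the set of invertible matrices whose determinant is a square. -/
theorem stmt_6 {K : Type*} [Field K] :
    (∀ M N : Matrix (Fin 3) (Fin 3) K, IsUnit M.det → IsUnit N.det →
      Cof (M * N) = Cof M * Cof N)
    ∧
    (∀ M : Matrix (Fin 3) (Fin 3) K, IsUnit M.det →
      (Cof M = 1 ↔ M = 1 ∨ M = -1))
    ∧
    (∀ M M' : Matrix (Fin 3) (Fin 3) K, IsUnit M.det → IsUnit M'.det →
      (Cof M = Cof M' ↔ M' = M ∨ M' = -M))
    ∧
    (∀ N : Matrix (Fin 3) (Fin 3) K, IsUnit N.det →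
      ((∃ M : Matrix (Fin 3) (Fin 3) K, IsUnit M.det ∧ Cof M = N) ↔
        ∃ d : K, N.det = d ^ 2)) := by
  refine ⟨fun M N _ _ => cof_mul M N, fun M h => cof_eq_one_iff M h, ?_, ?_⟩
  · intro M M' hM hM'
    constructor
    · intro hC
      set A := M⁻¹ * M' with hA
      have hAdet : IsUnit A.det := by
        rw [hA, Matrix.det_mul, Matrix.det_nonsing_inv]
        exact (hM.ringInverse).mul hM'
      have hMA : M * A = M' := by
        rw [hA, ← mul_assoc, Matrix.mul_nonsing_inv M hM, one_mul]
      have hCA : Cof M * Cof A = Cof M' := by rw [← cof_mul, hMA]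
      rw [hC] at hCA
      have hCunit : IsUnit (Cof M').det := cof_det_isUnit M' hM'
      have hA1 : Cof A = 1 := by
        have := congrArg (fun X => (Cof M')⁻¹ * X) hCA
        simpa [← mul_assoc, Matrix.nonsing_inv_mul _ hCunit] using this
      rcases (cof_eq_one_iff A hAdet).mp hA1 with h1 | h1
      · left; rw [← hMA, h1, mul_one]
      · right; rw [← hMA, h1]; simp
    · rintro (rfl | rfl)
      · rfl
      · rw [cof_neg]
  · intro N hN
    constructor
    · rintro ⟨M, hM, rfl⟩
      refine ⟨M.det, ?_⟩
      rw [Cof, Matrix.det_transpose, Matrix.det_adjugate]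
      norm_num
    · rintro ⟨d, hd⟩
      have hd0 : d ≠ 0 := by
        rintro rfl
        rw [hd] at hN
        simp at hN
      set M := d • (Nᵀ)⁻¹ with hMdef
      have hNTdet : Nᵀ.det = d ^ 2 := by rw [Matrix.det_transpose, hd]
      have hNTunit : IsUnit Nᵀ.det := by
        rw [hNTdet]; exact (isUnit_iff_ne_zero.mpr hd0).pow 2
      have hMdet : M.det = d := by
        rw [hMdef, Matrix.det_smul, Matrix.det_nonsing_inv, hNTdet]
        rw [Ring.inverse_eq_inv]
        field_simp
        rw [Fintype.card_fin]
      have hMunit : IsUnit M.det := by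
        rw [hMdet]; exact isUnit_iff_ne_zero.mpr hd0
      refine ⟨M, hMunit, ?_⟩
      have hMNT : M * Nᵀ = d • 1 := by
        rw [hMdef, Matrix.smul_mul, Matrix.nonsing_inv_mul _ hNTunit]
      have hMadj : M * Matrix.adjugate M = d • 1 := by
        rw [Matrix.mul_adjugate, hMdet]
      have hadj : Matrix.adjugate M = Nᵀ := by
        have h1 : M⁻¹ * (M * Matrix.adjugate M) = M⁻¹ * (M * Nᵀ) := by
          rw [hMadj, hMNT]
        rwa [← mul_assoc, ← mul_assoc, Matrix.nonsing_inv_mul _ hMunit, one_mul,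
          one_mul] at h1
      rw [Cof, hadj, Matrix.transpose_transpose]
end

section
/- Let Ω₁, Ω₂ be g×g complex matrices with Ω₂ invertible, set Ω = [Ω₁ Ω₂] (a g×2g matrix) and τ = Ω₂⁻¹·Ω₁, and let J = [[0, 1_g], [−1_g, 0]]. Then the following are equivalent: (1) Ω satisfies the Riemann conditions, i.e. Ω·J·Ωᵀ = 0, the matrix Ω̄·J⁻¹·Ωᵀ is invertible, and 2i·(Ω̄·J⁻¹·Ωᵀ)⁻¹ is a Hermitian positive definite matrix (Ω̄ denoting the entrywise complex conjugate of Ω); (2) τ is symmetric and the imaginary part of τ is positive definite (i.e. τ belongs to the Siegel upper half-space ℍ_g). -/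
open Matrix ComplexOrder

lemma aux_conj_zero {n : Type*} [Fintype n] [DecidableEq n] {B C X : Matrix n n ℂ}
    (hB : IsUnit B.det) (hC : IsUnit C.det) : B * X * C = 0 ↔ X = 0 := by
  constructor
  · intro h
    have hX : X = B⁻¹ * (B * X * C) * C⁻¹ := by
      simp only [Matrix.mul_assoc]
      rw [← Matrix.mul_assoc B⁻¹ B, Matrix.nonsing_inv_mul _ hB, Matrix.one_mul,
        Matrix.mul_nonsing_inv _ hC, Matrix.mul_one]
    rw [hX, h]
    simp
  · rintro rfl; simp

lemma aux_posdef_conj {n : Type*} [Fintype n] [DecidableEq n] {A : Matrix n n ℂ}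
    (hA : A.PosDef) {B : Matrix n n ℂ} (hB : IsUnit B.det) : (B * A * Bᴴ).PosDef := by
  refine posDef_iff_dotProduct_mulVec.mpr ⟨?_, fun x hx => ?_⟩
  · simp only [Matrix.IsHermitian, conjTranspose_mul, conjTranspose_conjTranspose,
      hA.1.eq, Matrix.mul_assoc]
  · have hBH : IsUnit Bᴴ.det := by
      rw [Matrix.det_conjTranspose]; exact hB.star
    have hBHx : Bᴴ *ᵥ x ≠ 0 := by
      intro h
      apply hx
      have := congrArg (fun v => (Bᴴ)⁻¹ *ᵥ v) h
      simpa [Matrix.mulVec_mulVec, Matrix.nonsing_inv_mul _ hBH] using this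
    simpa only [star_mulVec, dotProduct_mulVec, vecMul_vecMul, conjTranspose_conjTranspose,
      Matrix.mulVec_mulVec, Matrix.mul_assoc] using hA.dotProduct_mulVec_pos hBHx

lemma aux_dot_ofReal {n : Type*} [Fintype n] (N : Matrix n n ℝ) (u v : n → ℝ) :
    ((fun i => ((u i : ℝ) : ℂ)) ⬝ᵥ (N.map (Complex.ofReal : ℝ → ℂ)) *ᵥ (fun i => ((v i : ℝ) : ℂ)))
      = ((u ⬝ᵥ N *ᵥ v : ℝ) : ℂ) := by
  simp only [dotProduct, Matrix.mulVec, Matrix.map_apply]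
  push_cast
  rfl

lemma aux_posdef_ofReal {n : Type*} [Fintype n] {N : Matrix n n ℝ} :
    (N.map (Complex.ofReal : ℝ → ℂ)).PosDef ↔ N.PosDef := by
  constructor
  · rw [posDef_iff_dotProduct_mulVec, posDef_iff_dotProduct_mulVec]
    rintro ⟨h1, h2⟩
    constructor
    · ext i j
      have := congrFun (congrFun h1 i) j
      simp only [conjTranspose_apply, Matrix.map_apply, Complex.star_def,
        Complex.conj_ofReal] at this
      exact_mod_cast this
    · intro x hx
      have hxc : (fun i => ((x i : ℝ) : ℂ)) ≠ (0 : n → ℂ) := by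
        intro h
        apply hx
        funext i
        simpa using congrFun h i
      have h3 := h2 hxc
      have hstar : star (fun i => ((x i : ℝ) : ℂ)) = (fun i => ((x i : ℝ) : ℂ)) := by
        funext i; simp [Complex.conj_ofReal]
      rw [hstar, aux_dot_ofReal] at h3
      rw [Complex.zero_lt_real] at h3
      simpa using h3
  · rintro hN
    obtain ⟨h1, h2⟩ := posDef_iff_dotProduct_mulVec.mp hN
    have hNT : Nᵀ = N := by
      ext i j
      have := congrFun (congrFun h1 i) j
      simpa using this
    rw [posDef_iff_dotProduct_mulVec]
    constructor
    · ext i j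
      have := congrFun (congrFun h1 i) j
      simp only [conjTranspose_apply, Matrix.map_apply, Complex.star_def, Complex.conj_ofReal,
        Complex.ofReal_inj] at this ⊢
      exact_mod_cast this
    · intro x hx
      set a : n → ℝ := fun i => (x i).re with ha
      set b : n → ℝ := fun i => (x i).im with hb
      have hxs : x = (fun i => ((a i : ℝ) : ℂ)) + Complex.I • (fun i => ((b i : ℝ) : ℂ)) := by
        funext i
        apply Complex.ext <;> simp [ha, hb, mul_comm]
      have hxstar : star x
          = (fun i => ((a i : ℝ) : ℂ)) - Complex.I • (fun i => ((b i : ℝ) : ℂ)) := by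
        funext i
        apply Complex.ext <;> simp [ha, hb, mul_comm]
      have hab : a ≠ 0 ∨ b ≠ 0 := by
        by_contra h
        push_neg at h
        apply hx
        funext i
        apply Complex.ext
        · exact congrFun h.1 i
        · exact congrFun h.2 i
      have hsymm : b ⬝ᵥ N *ᵥ a = a ⬝ᵥ N *ᵥ b := by
        rw [Matrix.dotProduct_mulVec, ← Matrix.mulVec_transpose, hNT, dotProduct_comm]
      have hq : 0 < a ⬝ᵥ N *ᵥ a + b ⬝ᵥ N *ᵥ b := by
        have hQ : ∀ v : n → ℝ, 0 ≤ v ⬝ᵥ N *ᵥ v := by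
          intro v
          rcases eq_or_ne v 0 with rfl | h
          · simp
          · have := h2 h
            simpa using this.le
        rcases hab with h | h
        · have := h2 h
          have hb' := hQ b
          simp only [star_trivial] at this
          linarith
        · have := h2 h
          have ha' := hQ a
          simp only [star_trivial] at this
          linarith
      have key : star x ⬝ᵥ (N.map (Complex.ofReal : ℝ → ℂ)) *ᵥ x
          = ((a ⬝ᵥ N *ᵥ a + b ⬝ᵥ N *ᵥ b : ℝ) : ℂ) := by
        rw [hxstar]
        conv_lhs => rw [hxs]
        simp only [Matrix.mulVec_add, Matrix.mulVec_smul, sub_dotProduct,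
          dotProduct_add, smul_dotProduct, dotProduct_smul]
        simp only [aux_dot_ofReal, smul_eq_mul, hsymm]
        push_cast
        ring_nf
        rw [Complex.I_sq]
        ring
      rw [key, Complex.zero_lt_real]
      exact hq

/-- Riemann conditions: for `Ω = [Ω₁ Ω₂]` with `Ω₂` invertible and `τ = Ω₂⁻¹·Ω₁`,
the conditions `Ω·J·Ωᵀ = 0`, `Ω̄·J⁻¹·Ωᵀ` invertible and `2i·(Ω̄·J⁻¹·Ωᵀ)⁻¹` Hermitian
positive definite are together equivalent to: `τ` is symmetric with positive
definite imaginary part (i.e. `τ ∈ ℍ_g`). -/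
theorem stmt_13 {g : ℕ} (Ω₁ Ω₂ : Matrix (Fin g) (Fin g) ℂ) (hΩ₂ : IsUnit Ω₂.det)
    (J : Matrix (Fin g ⊕ Fin g) (Fin g ⊕ Fin g) ℂ) (hJ : J = fromBlocks 0 1 (-1) 0)
    (Ω : Matrix (Fin g) (Fin g ⊕ Fin g) ℂ) (hΩ : Ω = fromCols Ω₁ Ω₂)
    (τ : Matrix (Fin g) (Fin g) ℂ) (hτ : τ = Ω₂⁻¹ * Ω₁) :
    (Ω * J * Ωᵀ = 0 ∧ IsUnit (Ω.map (starRingEnd ℂ) * J⁻¹ * Ωᵀ).det ∧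
        ((2 * Complex.I) • (Ω.map (starRingEnd ℂ) * J⁻¹ * Ωᵀ)⁻¹).PosDef)
      ↔ (τ.IsSymm ∧ (τ.map Complex.im).PosDef) := by
  set c := starRingEnd ℂ with hc
  set Nc : Matrix (Fin g) (Fin g) ℂ := (τ.map Complex.im).map (Complex.ofReal : ℝ → ℂ)
    with hNcdef
  have hU2T : IsUnit (Ω₂ᵀ).det := by rwa [Matrix.det_transpose]
  have hU2c : IsUnit ((Ω₂.map c).det) := by
    have : (Ω₂.map c).det = c Ω₂.det := ((starRingEnd ℂ).map_det Ω₂).symm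
    rw [this]; exact hΩ₂.map _
  have hΩ₁ : Ω₁ = Ω₂ * τ := by
    rw [hτ, ← Matrix.mul_assoc, Matrix.mul_nonsing_inv _ hΩ₂, Matrix.one_mul]
  have hJinv : J⁻¹ = fromBlocks 0 (-1) 1 0 := by
    apply Matrix.inv_eq_right_inv
    rw [hJ, fromBlocks_multiply]
    simp [Matrix.fromBlocks_one]
  have hΩc : Ω.map c = fromCols (Ω₁.map c) (Ω₂.map c) := by
    rw [hΩ]
    ext i (j | j) <;>
      simp [Matrix.map_apply, fromCols_apply_inl, fromCols_apply_inr]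
  have key1 : Ω * J * Ωᵀ = Ω₂ * (τ - τᵀ) * Ω₂ᵀ := by
    rw [hΩ, hJ, transpose_fromCols, fromCols_mul_fromBlocks, fromCols_mul_fromRows,
      hΩ₁, Matrix.transpose_mul]
    noncomm_ring
  have key2 : Ω.map c * J⁻¹ * Ωᵀ = (Ω₂.map c) * (τᵀ - τ.map c) * Ω₂ᵀ := by
    rw [hΩc, hJinv, hΩ, transpose_fromCols, fromCols_mul_fromBlocks,
      fromCols_mul_fromRows, hΩ₁, Matrix.transpose_mul, Matrix.map_mul]
    noncomm_ring
  have hsymm_iff : Ω * J * Ωᵀ = 0 ↔ τ.IsSymm := by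
    rw [key1, aux_conj_zero hΩ₂ hU2T, sub_eq_zero, Matrix.IsSymm, eq_comm]
  have hdiff : τ.IsSymm → τᵀ - τ.map c = (2 * Complex.I) • Nc := by
    intro hs
    rw [hs.eq]
    ext i j
    simp only [Matrix.sub_apply, Matrix.map_apply, Matrix.smul_apply, smul_eq_mul, hNcdef, hc]
    rw [Complex.sub_conj]
    push_cast
    ring
  have hM : τ.IsSymm → Ω.map c * J⁻¹ * Ωᵀ = (2 * Complex.I) • ((Ω₂.map c) * Nc * Ω₂ᵀ) := by
    intro hs
    rw [key2, hdiff hs, Matrix.mul_smul, Matrix.smul_mul]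
  have h2I : (2 * Complex.I) ≠ 0 := by simp [Complex.I_ne_zero]
  have hMinv : τ.IsSymm → IsUnit Nc.det →
      (2 * Complex.I) • (Ω.map c * J⁻¹ * Ωᵀ)⁻¹ = (Ω₂ᵀ)⁻¹ * Nc⁻¹ * ((Ω₂ᵀ)⁻¹)ᴴ := by
    intro hs hNcu
    rw [hM hs]
    have hinv : ((2 * Complex.I) • ((Ω₂.map c) * Nc * Ω₂ᵀ))⁻¹
        = (2 * Complex.I)⁻¹ • ((Ω₂ᵀ)⁻¹ * Nc⁻¹ * (Ω₂.map c)⁻¹) := by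
      apply Matrix.inv_eq_right_inv
      rw [Matrix.smul_mul, Matrix.mul_smul, smul_smul, mul_inv_cancel₀ h2I, one_smul]
      calc (Ω₂.map c) * Nc * Ω₂ᵀ * ((Ω₂ᵀ)⁻¹ * Nc⁻¹ * (Ω₂.map c)⁻¹)
          = (Ω₂.map c) * (Nc * ((Ω₂ᵀ * (Ω₂ᵀ)⁻¹) * (Nc⁻¹ * (Ω₂.map c)⁻¹))) := by
            simp only [Matrix.mul_assoc]
        _ = 1 := by
            rw [Matrix.mul_nonsing_inv _ hU2T, Matrix.one_mul]
            simp only [← Matrix.mul_assoc]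
            rw [Matrix.mul_nonsing_inv_cancel_right _ _ hNcu, Matrix.mul_nonsing_inv _ hU2c]
    rw [hinv, smul_smul, mul_inv_cancel₀ h2I, one_smul]
    have hCT : (Ω₂ᵀ)ᴴ = Ω₂.map c := by
      ext i j
      simp [Matrix.conjTranspose_apply, Matrix.map_apply, hc]
    rw [Matrix.conjTranspose_nonsing_inv, hCT]
  have hAu : IsUnit ((Ω₂ᵀ)⁻¹).det := Matrix.isUnit_nonsing_inv_det _ hU2T
  constructor
  · rintro ⟨h1, h2, h3⟩
    have hs : τ.IsSymm := hsymm_iff.mp h1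
    refine ⟨hs, ?_⟩
    have hNcu : IsUnit Nc.det := by
      rw [hM hs] at h2
      simp only [Matrix.det_smul, Matrix.det_mul, IsUnit.mul_iff] at h2
      exact h2.2.1.2
    rw [hMinv hs hNcu] at h3
    have hback : Ω₂ᵀ * ((Ω₂ᵀ)⁻¹ * Nc⁻¹ * ((Ω₂ᵀ)⁻¹)ᴴ) * (Ω₂ᵀ)ᴴ = Nc⁻¹ := by
      rw [Matrix.conjTranspose_nonsing_inv]
      have hU2TH : IsUnit ((Ω₂ᵀ)ᴴ).det := by
        rw [Matrix.det_conjTranspose]; exact hU2T.star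
      calc Ω₂ᵀ * ((Ω₂ᵀ)⁻¹ * Nc⁻¹ * ((Ω₂ᵀ)ᴴ)⁻¹) * (Ω₂ᵀ)ᴴ
          = (Ω₂ᵀ * (Ω₂ᵀ)⁻¹) * Nc⁻¹ * (((Ω₂ᵀ)ᴴ)⁻¹ * (Ω₂ᵀ)ᴴ) := by
            simp only [Matrix.mul_assoc]
        _ = Nc⁻¹ := by
            rw [Matrix.mul_nonsing_inv _ hU2T, Matrix.nonsing_inv_mul _ hU2TH,
              Matrix.one_mul, Matrix.mul_one]
    have hNciPos : Nc⁻¹.PosDef := hback ▸ aux_posdef_conj h3 hU2T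
    have hNcPos : Nc.PosDef := by
      have := hNciPos.inv
      rwa [Matrix.nonsing_inv_nonsing_inv _ hNcu] at this
    exact aux_posdef_ofReal.mp hNcPos
  · rintro ⟨hs, hN⟩
    have hNcPos : Nc.PosDef := aux_posdef_ofReal.mpr hN
    have hNcu : IsUnit Nc.det := isUnit_iff_ne_zero.mpr hNcPos.det_pos.ne'
    refine ⟨hsymm_iff.mpr hs, ?_, ?_⟩
    · rw [hM hs]
      simp only [Matrix.det_smul, Matrix.det_mul]
      exact ((isUnit_iff_ne_zero.mpr h2I).pow _).mul ((hU2c.mul hNcu).mul hU2T)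
    · rw [hMinv hs hNcu]
      exact aux_posdef_conj hNcPos.inv hAu
end
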